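/- arXiv:2001.06775 — 5 statements merged into one kernel-verified Lean document; each statement's English description precedes it below -/
import Mathlib

section
/- For every r ≥ 2 and every positive integer m, there exists a graph G with γ_r(G) = 1 and ω_r(G) ≥ m; that is, the gap between ω_r and γ_r can be arbitrarily large. -/
open SimpleGraph Finset CategoryTheory AlgebraicTopology

variable {V : Type} [Fintype V] [DecidableEq V]

/-- A finset `A` is `r`-independent in `G` if every connected component of the
induced subgraph `G[A]` has at most `r` vertices. -/
def IsRIndep (G : SimpleGraph V) (r : ℕ) (A : Finset V) : Prop :=
  ∀ (v : V) (hv : v ∈ A),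
    Set.ncard {w : (A : Set V) | (G.induce (A : Set V)).Reachable ⟨v, hv⟩ w} ≤ r

/-- The `r`-independence complex of `G`, as the set of its faces. -/
def IndCompl (G : SimpleGraph V) (r : ℕ) : Set (Finset V) := {A | IsRIndep G r A}

/-- The `r`-independence complex of the induced subgraph of `G` on `W`. -/
def IndComplOn (G : SimpleGraph V) (r : ℕ) (W : Set V) : Set (Finset V) :=
  {A | ↑A ⊆ W ∧ IsRIndep G r A}

/-- The star of a face in a complex. -/
def starCl (K : Set (Finset V)) (σ : Finset V) : Set (Finset V) := {τ ∈ K | σ ∪ τ ∈ K}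

/-- Join of two simplicial complexes (on disjoint vertex sets). -/
def joinCl (K L : Set (Finset V)) : Set (Finset V) := {A | ∃ σ ∈ K, ∃ τ ∈ L, A = σ ∪ τ}

/-- The set of `r`-supports of a vertex `v` in `G`. -/
def Supp (G : SimpleGraph V) (r : ℕ) (v : V) : Set (Finset V) :=
  {S | v ∉ S ∧ S.card = r ∧ (G.induce (insert v ↑S : Set V)).Connected}

/-- Closed neighborhood of a set of vertices. -/
def closedNbhd (G : SimpleGraph V) (S : Set V) : Set V := S ∪ {w | ∃ s ∈ S, G.Adj w s}

/-- Geometric realization of a complex on the finite vertex set `V`. -/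
def realization (K : Set (Finset V)) : Type :=
  {f : V → ℝ // (∀ v, 0 ≤ f v) ∧ (∑ v, f v = 1) ∧ ∃ σ ∈ K, ∀ v, f v ≠ 0 → v ∈ σ}

instance (K : Set (Finset V)) : TopologicalSpace (realization K) := by
  delta realization; infer_instance

def sphereT (n : ℕ) : Type := Metric.sphere (0 : EuclideanSpace ℝ (Fin (n + 1))) 1

noncomputable instance (n : ℕ) : TopologicalSpace (sphereT n) := by
  delta sphereT; infer_instance

noncomputable def spherePt (n : ℕ) : sphereT n :=
  ⟨EuclideanSpace.single 0 1, by simp⟩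

/-- Wedge sum of a family of pointed spaces. -/
def Wedge {ι : Type} (X : ι → Type) [∀ i, TopologicalSpace (X i)] (pt : ∀ i, X i) : Type :=
  Quot (fun a b : Σ i, X i => a.2 = pt a.1 ∧ b.2 = pt b.1)

instance {ι : Type} (X : ι → Type) [∀ i, TopologicalSpace (X i)] (pt : ∀ i, X i) :
    TopologicalSpace (Wedge X pt) := by delta Wedge; infer_instance

/-- Distance `r`-dominating set. -/
def IsDistDomSet (G : SimpleGraph V) (r : ℕ) (D : Finset V) : Prop :=
  ∀ v : V, ∃ d ∈ D, G.Reachable v d ∧ G.dist v d ≤ r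

/-- Distance `r`-domination number `γ_r(G)`. -/
noncomputable def gammaR (G : SimpleGraph V) (r : ℕ) : ℕ :=
  sInf {n | ∃ D : Finset V, IsDistDomSet G r D ∧ D.card = n}

/-- Dominating `r`-collection. -/
def IsDomRColl (G : SimpleGraph V) (r : ℕ) (F : Finset (Finset V)) : Prop :=
  (∀ S ∈ F, (G.induce (S : Set V)).Connected ∧ S.card ≤ r) ∧
  ∀ v : V, ∃ S ∈ F, v ∈ S ∨ ∃ s ∈ S, G.Adj v s

/-- `r`-set domination number `ω_r(G)`. -/
noncomputable def omegaR (G : SimpleGraph V) (r : ℕ) : ℕ :=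
  sInf {n | ∃ F : Finset (Finset V), IsDomRColl G r F ∧ F.card = n}

/-- Singular homology functor with integer coefficients. -/
noncomputable def singularHomologyF (n : ℕ) : TopCat.{0} ⥤ ModuleCat ℤ :=
  TopCat.toSSet ⋙ ((SimplicialObject.whiskering _ _).obj (ModuleCat.free ℤ)) ⋙
    alternatingFaceMapComplex (ModuleCat ℤ) ⋙ HomologicalComplex.homologyFunctor _ _ n

/-- Vanishing of reduced singular homology `H̃_n(X;ℤ)`, expressed as injectivity of the
map induced on homology by the map to a point. -/
def RedHomVanish (X : Type) [TopologicalSpace X] (n : ℕ) : Prop :=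
  Function.Injective ((singularHomologyF n).map
    (X := TopCat.of X) (Y := TopCat.of PUnit) (TopCat.ofHom (ContinuousMap.const X PUnit.unit)))

/-- Chordality: every cycle of length at least 4 has a chord. -/
def IsChordal (G : SimpleGraph V) : Prop :=
  ∀ (v : V) (w : G.Walk v v), w.IsCycle → 4 ≤ w.length →
    ∃ x y, x ∈ w.support ∧ y ∈ w.support ∧ G.Adj x y ∧ s(x, y) ∉ w.edges

/-- Unreduced suspension (with the convention `Susp ∅ = S⁰`). -/
def Susp (X : Type) [TopologicalSpace X] : Type :=
  Quot (fun a b : X × unitInterval ⊕ Bool => match a, b with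
    | .inl (_, t), .inr s => (t = 0 ∧ s = false) ∨ (t = 1 ∧ s = true)
    | _, _ => False)

instance (X : Type) [TopologicalSpace X] : TopologicalSpace (Susp X) := by
  delta Susp; infer_instance

def SuspObj (X : TopCat.{0}) : TopCat.{0} := TopCat.of (Susp X)

/-- `r`-fold suspension. -/
def SuspIter (n : ℕ) (X : TopCat.{0}) : TopCat.{0} := SuspObj^[n] X

def north (X : TopCat.{0}) : Susp X := Quot.mk _ (Sum.inr true)

def northIter : (n : ℕ) → (X : TopCat.{0}) → SuspIter (n + 1) X
  | 0, X => north X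
  | n + 1, X => northIter n (SuspObj X)

/-- Base point of an iterated suspension (at least one suspension). -/
def northIter' (n : ℕ) (_ : 0 < n) (X : TopCat.{0}) : SuspIter n X :=
  match n with
  | m + 1 => northIter m X


section Spider

/-- Directed neighbor relation of the spider graph: center `none`, legs indexed by `Fin m`,
each leg a path of `r` vertices. -/
def nbrRel (m r : ℕ) : Option (Fin m × Fin r) → Option (Fin m × Fin r) → Prop
  | none, some p => (p.2 : ℕ) = 0
  | some p, some q => p.1 = q.1 ∧ (p.2 : ℕ) + 1 = (q.2 : ℕ)
  | _, _ => False

/-- The spider graph with `m` legs of length `r`. -/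
def spider (m r : ℕ) : SimpleGraph (Option (Fin m × Fin r)) :=
  SimpleGraph.fromRel (nbrRel m r)

lemma spider_adj {m r : ℕ} {a b : Option (Fin m × Fin r)} :
    (spider m r).Adj a b ↔ a ≠ b ∧ (nbrRel m r a b ∨ nbrRel m r b a) :=
  SimpleGraph.fromRel_adj _ _ _

/-- Walk from a leg vertex to the center. -/
def walkToC (m r : ℕ) : ∀ (j : ℕ) (h : j < r) (i : Fin m),
    (spider m r).Walk (some (i, ⟨j, h⟩)) none
  | 0, h, i => SimpleGraph.Walk.cons
      (by
        rw [spider_adj]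
        exact ⟨by simp, Or.inr (by simp [nbrRel])⟩) SimpleGraph.Walk.nil
  | j + 1, h, i =>
    have hadj : (spider m r).Adj (some (i, ⟨j + 1, h⟩))
        (some (i, ⟨j, Nat.lt_of_succ_lt h⟩)) := by
      rw [spider_adj]
      exact ⟨by simp [Fin.ext_iff], Or.inr ⟨rfl, rfl⟩⟩
    SimpleGraph.Walk.cons hadj (walkToC m r j (Nat.lt_of_succ_lt h) i)

lemma walkToC_length (m r : ℕ) : ∀ (j : ℕ) (h : j < r) (i : Fin m),
    (walkToC m r j h i).length = j + 1
  | 0, h, i => by simp [walkToC]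
  | j + 1, h, i => by
    simp only [walkToC, SimpleGraph.Walk.length_cons, walkToC_length m r j]

lemma gammaR_spider (m r : ℕ) (hr : 1 ≤ r) : gammaR (spider m r) r = 1 := by
  have hmem : (1 : ℕ) ∈ {n | ∃ D : Finset (Option (Fin m × Fin r)),
      IsDistDomSet (spider m r) r D ∧ D.card = n} := by
    refine ⟨{none}, ?_, by simp⟩
    intro v
    refine ⟨none, by simp, ?_⟩
    match v with
    | none =>
      refine ⟨SimpleGraph.Reachable.refl _, ?_⟩
      rw [SimpleGraph.dist_self]
      omega
    | some (i, ⟨j, hj⟩) =>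
      refine ⟨⟨walkToC m r j hj i⟩,
        le_trans (SimpleGraph.dist_le (walkToC m r j hj i)) ?_⟩
      rw [walkToC_length m r j hj i]
      omega
  have hne : {n | ∃ D : Finset (Option (Fin m × Fin r)),
      IsDistDomSet (spider m r) r D ∧ D.card = n}.Nonempty := ⟨1, hmem⟩
  have h1 : ∀ n ∈ {n | ∃ D : Finset (Option (Fin m × Fin r)),
      IsDistDomSet (spider m r) r D ∧ D.card = n}, 1 ≤ n := by
    rintro n ⟨D, hD, rfl⟩
    rcases Nat.eq_zero_or_pos D.card with h0 | h
    · exfalso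
      obtain ⟨d, hd, -⟩ := hD none
      rw [Finset.card_eq_zero] at h0
      simp [h0] at hd
    · exact h
  exact le_antisymm (Nat.sInf_le hmem) (h1 _ (Nat.sInf_mem hne))

/-- The boundary lemma: a walk starting on leg `i` and ending off leg `i` visits
every leg-`i` vertex of depth at most the starting depth, and visits the center. -/
lemma spider_walk_support {m r : ℕ} {i : Fin m} {a : Fin r} {w : Option (Fin m × Fin r)}
    (hw : ∀ b : Fin r, w ≠ some (i, b))
    (q : (spider m r).Walk (some (i, a)) w) :
    (∀ (k : ℕ) (hk : k ≤ (a : ℕ)) (hkr : k < r), some (i, ⟨k, hkr⟩) ∈ q.support) ∧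
      none ∈ q.support := by
  constructor
  · intro k hk hkr
    set A : Set (Option (Fin m × Fin r)) :=
      {x | ∃ b : Fin r, x = some (i, b) ∧ k ≤ (b : ℕ)} with hA
    have hstart : some (i, a) ∈ A := ⟨a, rfl, hk⟩
    have hend : w ∉ A := by rintro ⟨b, rfl, -⟩; exact hw b rfl
    obtain ⟨d, hd, hfst, hsnd⟩ := q.exists_boundary_dart A hstart hend
    obtain ⟨b, hb, hkb⟩ := hfst
    have hadj := d.adj
    have hmemfst : d.fst ∈ q.support := q.dart_fst_mem_support_of_mem_darts hd
    rw [spider_adj] at hadj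
    -- analyze the dart's second endpoint
    have hbk : (b : ℕ) = k := by
      match hsndval : d.snd with
      | none =>
        rcases hadj.2 with h1 | h2
        · rw [hb, hsndval] at h1; exact absurd h1 (by simp [nbrRel])
        · rw [hb, hsndval] at h2
          simp only [nbrRel] at h2
          omega
      | some (i₂, b₂) =>
        rcases hadj.2 with h1 | h2
        · rw [hb, hsndval] at h1
          obtain ⟨hi, hbb⟩ := h1
          dsimp only at hi hbb
          exfalso
          exact hsnd ⟨b₂, by rw [hsndval, hi], by omega⟩
        · rw [hb, hsndval] at h2
          obtain ⟨hi, hbb⟩ := h2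
          dsimp only at hi hbb
          have : ¬ (k ≤ (b₂ : ℕ)) := fun hle => hsnd ⟨b₂, by rw [hsndval, ← hi], hle⟩
          omega
    have : d.fst = some (i, ⟨k, hkr⟩) := by
      rw [hb]
      congr 1
      ext <;> simp [hbk]
    rwa [this] at hmemfst
  · set A : Set (Option (Fin m × Fin r)) :=
      {x | ∃ b : Fin r, x = some (i, b)} with hA
    have hstart : some (i, a) ∈ A := ⟨a, rfl⟩
    have hend : w ∉ A := by rintro ⟨b, rfl⟩; exact hw b rfl
    obtain ⟨d, hd, hfst, hsnd⟩ := q.exists_boundary_dart A hstart hend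
    obtain ⟨b, hb⟩ := hfst
    have hadj := d.adj
    have hmemsnd : d.snd ∈ q.support := q.dart_snd_mem_support_of_mem_darts hd
    rw [spider_adj] at hadj
    match hsndval : d.snd with
    | none => rwa [hsndval] at hmemsnd
    | some (i₂, b₂) =>
      exfalso
      rcases hadj.2 with h1 | h2
      · rw [hb, hsndval] at h1
        have hi : i = i₂ := h1.1
        exact hsnd ⟨b₂, by rw [hsndval, hi]⟩
      · rw [hb, hsndval] at h2
        have hi : i₂ = i := h2.1
        exact hsnd ⟨b₂, by rw [hsndval, ← hi]⟩

/-- Key lemma: a connected set of at most `r` vertices cannot cover the tips of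
two distinct legs. -/
lemma spider_key {m r : ℕ} (hr : 2 ≤ r) (S : Finset (Option (Fin m × Fin r)))
    (hconn : ((spider m r).induce (S : Set _)).Connected) (hcard : S.card ≤ r)
    (i i' : Fin m) (hii : i ≠ i')
    (h1 : ∃ b : Fin r, r - 2 ≤ (b : ℕ) ∧ some (i, b) ∈ S)
    (h2 : ∃ b : Fin r, r - 2 ≤ (b : ℕ) ∧ some (i', b) ∈ S) : False := by
  obtain ⟨b1, hb1, hb1S⟩ := h1
  obtain ⟨b2, hb2, hb2S⟩ := h2
  -- a walk in the induced subgraph from (i, b1) to (i', b2)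
  obtain ⟨p⟩ := hconn.preconnected ⟨some (i, b1), hb1S⟩ ⟨some (i', b2), hb2S⟩
  let q := p.map (SimpleGraph.Embedding.induce (S : Set (Option (Fin m × Fin r)))).toHom
  have hqsupp : ∀ x ∈ q.support, x ∈ S := by
    intro x hx
    rw [SimpleGraph.Walk.support_map, List.mem_map] at hx
    obtain ⟨y, hy, rfl⟩ := hx
    exact y.2
  have hw1 : ∀ b : Fin r, (some (i', b2) : Option (Fin m × Fin r)) ≠ some (i, b) := by
    intro b h
    apply hii
    injection h with h'
    exact ((Prod.mk.injEq _ _ _ _).mp h').1.symm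
  obtain ⟨hlegi, hcS⟩ := spider_walk_support hw1 q
  have hw2 : ∀ b : Fin r, (some (i, b1) : Option (Fin m × Fin r)) ≠ some (i', b) := by
    intro b h
    apply hii
    injection h with h'
    exact ((Prod.mk.injEq _ _ _ _).mp h').1
  obtain ⟨hlegi', -⟩ := spider_walk_support hw2 q.reverse
  have hmem1 : ∀ (k : ℕ) (hk : k < r - 1), some (i, (⟨k, by omega⟩ : Fin r)) ∈ S := by
    intro k hk
    exact hqsupp _ (hlegi k (by omega) (by omega))
  have hmem2 : ∀ (k : ℕ) (hk : k < r - 1), some (i', (⟨k, by omega⟩ : Fin r)) ∈ S := by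
    intro k hk
    have := hlegi' k (by omega) (by omega)
    have h2 : some (i', (⟨k, by omega⟩ : Fin r)) ∈ q.support.reverse := by
      rw [← SimpleGraph.Walk.support_reverse]; exact this
    exact hqsupp _ (List.mem_reverse.mp h2)
  have hmemc : (none : Option (Fin m × Fin r)) ∈ S := hqsupp _ hcS
  -- build a large subset of S
  classical
  let T1 : Finset (Option (Fin m × Fin r)) :=
    (Finset.univ : Finset (Fin (r - 1))).image
      (fun k : Fin (r - 1) => some (i, (⟨(k : ℕ), lt_of_lt_of_le k.isLt (by omega)⟩ : Fin r)))
  let T2 : Finset (Option (Fin m × Fin r)) :=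
    (Finset.univ : Finset (Fin (r - 1))).image
      (fun k : Fin (r - 1) => some (i', (⟨(k : ℕ), lt_of_lt_of_le k.isLt (by omega)⟩ : Fin r)))
  have hT1card : T1.card = r - 1 := by
    rw [Finset.card_image_of_injective _ (fun a b hab => by
      injection hab with h'
      have := ((Prod.mk.injEq _ _ _ _).mp h').2
      exact Fin.ext (by simpa [Fin.ext_iff] using this))]
    simp
  have hT2card : T2.card = r - 1 := by
    rw [Finset.card_image_of_injective _ (fun a b hab => by
      injection hab with h'
      have := ((Prod.mk.injEq _ _ _ _).mp h').2
      exact Fin.ext (by simpa [Fin.ext_iff] using this))]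
    simp
  have hdisj : Disjoint T1 T2 := by
    rw [Finset.disjoint_left]
    rintro x hx1 hx2
    simp only [T1, T2, Finset.mem_image, Finset.mem_univ, true_and] at hx1 hx2
    obtain ⟨k1, rfl⟩ := hx1
    obtain ⟨k2, hk2⟩ := hx2
    apply hii
    injection hk2 with h'
    exact ((Prod.mk.injEq _ _ _ _).mp h').1.symm
  have hnotmem : (none : Option (Fin m × Fin r)) ∉ T1 ∪ T2 := by
    rw [Finset.mem_union]
    rintro (h | h) <;>
      { simp only [T1, T2, Finset.mem_image] at h; obtain ⟨k, -, hk⟩ := h; exact Option.some_ne_none _ hk }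
  have hsub : insert none (T1 ∪ T2) ⊆ S := by
    intro x hx
    rw [Finset.mem_insert] at hx
    rcases hx with rfl | hx
    · exact hmemc
    rw [Finset.mem_union] at hx
    rcases hx with hx | hx <;>
      { simp only [T1, T2, Finset.mem_image, Finset.mem_univ, true_and] at hx
        obtain ⟨k, rfl⟩ := hx
        first
          | exact hmem1 (k : ℕ) k.isLt
          | exact hmem2 (k : ℕ) k.isLt }
  have hbig : (insert none (T1 ∪ T2)).card = 2 * (r - 1) + 1 := by
    rw [Finset.card_insert_of_notMem hnotmem, Finset.card_union_of_disjoint hdisj,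
      hT1card, hT2card]
    omega
  have := Finset.card_le_card hsub
  omega

lemma cover_to_leg {m r : ℕ} (hr : 2 ≤ r) (S : Finset (Option (Fin m × Fin r))) (i : Fin m)
    (hcov : some (i, (⟨r - 1, by omega⟩ : Fin r)) ∈ S ∨
      ∃ s ∈ S, (spider m r).Adj (some (i, (⟨r - 1, by omega⟩ : Fin r))) s) :
    ∃ b : Fin r, r - 2 ≤ (b : ℕ) ∧ some (i, b) ∈ S := by
  rcases hcov with h | ⟨s, hs, hadj⟩
  · exact ⟨⟨r - 1, by omega⟩, by simp; omega, h⟩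
  · rw [spider_adj] at hadj
    match hsv : s with
    | none =>
      exfalso
      rcases hadj.2 with h1 | h2
      · exact h1
      · simp only [nbrRel] at h2; omega
    | some (i₂, b₂) =>
      rcases hadj.2 with h1 | h2
      · obtain ⟨-, hbb⟩ := h1
        exfalso
        have := b₂.isLt
        simp only at hbb
        omega
      · obtain ⟨hi, hbb⟩ := h2
        simp only at hi hbb
        refine ⟨b₂, by omega, ?_⟩
        rw [← hi]
        exact hs

lemma omegaR_spider_lb {m r : ℕ} (hr : 2 ≤ r)
    (F : Finset (Finset (Option (Fin m × Fin r))))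
    (hF : IsDomRColl (spider m r) r F) : m ≤ F.card := by
  classical
  have hcov := hF.2
  choose f hfF hfc using fun i : Fin m => hF.2 (some (i, (⟨r - 1, by omega⟩ : Fin r)))
  have hinj : Set.InjOn f (Finset.univ : Finset (Fin m)) := by
    intro i _ i' _ hff
    by_contra hii
    have h1 := cover_to_leg hr (f i) i (hfc i)
    have h2' := hfc i'
    rw [← hff] at h2'
    have h2 := cover_to_leg hr (f i) i' h2'
    obtain ⟨hFprop⟩ := hF
    exact spider_key hr (f i) (hFprop (f i) (hfF i)).1 (hFprop (f i) (hfF i)).2 i i' hii h1 h2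
  calc m = (Finset.univ : Finset (Fin m)).card := by simp
    _ ≤ F.card := Finset.card_le_card_of_injOn f (fun i _ => hfF i) hinj

lemma omegaR_spider {m r : ℕ} (hr : 2 ≤ r) : m ≤ omegaR (spider m r) r := by
  classical
  have hne : {n | ∃ F : Finset (Finset (Option (Fin m × Fin r))),
      IsDomRColl (spider m r) r F ∧ F.card = n}.Nonempty := by
    refine ⟨_, (Finset.univ : Finset (Option (Fin m × Fin r))).image
      (fun v => ({v} : Finset _)), ⟨?_, ?_⟩, rfl⟩
    · intro S hS
      simp only [Finset.mem_image, Finset.mem_univ, true_and] at hS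
      obtain ⟨v, rfl⟩ := hS
      refine ⟨?_, by simp; omega⟩
      haveI : Nonempty (↑(↑({v} : Finset (Option (Fin m × Fin r))) :
          Set (Option (Fin m × Fin r)))) := ⟨⟨v, by simp⟩⟩
      refine SimpleGraph.Connected.mk ?_
      intro x y
      have hx : (x : Option (Fin m × Fin r)) = v := by
        have := x.2; simpa using this
      have hy : (y : Option (Fin m × Fin r)) = v := by
        have := y.2; simpa using this
      have : x = y := Subtype.ext (hx.trans hy.symm)
      rw [this]
    · intro v
      exact ⟨{v}, Finset.mem_image_of_mem _ (Finset.mem_univ v), Or.inl (by simp)⟩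
  obtain ⟨F, hF, hFcard⟩ := Nat.sInf_mem hne
  rw [omegaR, ← hFcard]
  exact omegaR_spider_lb hr F hF

end Spider

/-- the gap between `ω_r` and `γ_r` can be arbitrarily large. -/
theorem omegaR_gammaR_gap (r : ℕ) (hr : 2 ≤ r) (m : ℕ) (hm : 0 < m) :
    ∃ (V : Type) (_ : Fintype V) (_ : DecidableEq V) (G : SimpleGraph V),
      gammaR G r = 1 ∧ m ≤ omegaR G r := by
  exact ⟨Option (Fin m × Fin r), inferInstance, inferInstance, spider m r,
    gammaR_spider m r (by omega), omegaR_spider hr⟩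
end

section
/- For any graph G, any vertex v of G, and any r ≥ 1, the r-independence complex of G equals the union of the star of v with the stars of all r-supports of v: Ind_r(G) = st(v) ∪ ⋃_{S ∈ Supp_r(v,G)} st(S). -/
open SimpleGraph Finset CategoryTheory AlgebraicTopology

variable {V : Type} [Fintype V] [DecidableEq V]

/-- Transfer a walk in `G.induce t` whose support lies in `s ⊆ t` down to reachability
in `G.induce s`. -/
lemma walk_transfer (G : SimpleGraph V) {s t : Set V} {a b : ↑t}
    (p : (G.induce t).Walk a b) (hsup : ∀ x ∈ p.support, ↑x ∈ s)
    (ha : ↑a ∈ s) (hb : ↑b ∈ s) :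
    (G.induce s).Reachable ⟨↑a, ha⟩ ⟨↑b, hb⟩ := by
  induction p with
  | nil =>
      exact Reachable.refl _
  | @cons a c b h q ih =>
      have hc : ↑c ∈ s := hsup c (by simp)
      have hadj : (G.induce s).Adj ⟨↑a, ha⟩ ⟨↑c, hc⟩ := by
        simpa using h
      exact hadj.reachable.trans (ih (fun x hx => hsup x (by simp [hx])) hc hb)

lemma exists_boundary {W : Type*} (H : SimpleGraph W) {a b : W}
    (p : H.Walk a b) (S : Set W) (ha : a ∈ S) (hb : b ∉ S) :
    ∃ x ∈ S, ∃ y, y ∉ S ∧ H.Adj x y := by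
  induction p with
  | nil => exact absurd ha hb
  | @cons a c b h q ih =>
      by_cases hc : c ∈ S
      · exact ih hc hb
      · exact ⟨a, ha, c, hc, h⟩

lemma induce_singleton_connected (G : SimpleGraph V) (v : V) :
    (G.induce ({v} : Set V)).Connected := by
  rw [connected_iff_exists_forall_reachable]
  refine ⟨⟨v, rfl⟩, fun w => ?_⟩
  have : w = ⟨v, rfl⟩ := Subtype.ext w.2
  rw [this]

lemma grow (G : SimpleGraph V) (C : Finset V) (v : V) (hv : v ∈ C)
    (hC : (G.induce (↑C : Set V)).Connected) :
    ∀ k, 1 ≤ k → k ≤ C.card →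
      ∃ T : Finset V, T ⊆ C ∧ v ∈ T ∧ T.card = k ∧ (G.induce (↑T : Set V)).Connected := by
  intro k
  induction k with
  | zero => omega
  | succ k ih =>
      intro _ hk
      rcases Nat.eq_zero_or_pos k with hk0 | hk1
      · subst hk0
        refine ⟨{v}, by simpa using hv, by simp, by simp, ?_⟩
        have h1 : (↑({v} : Finset V) : Set V) = ({v} : Set V) := by simp
        rw [h1]
        exact induce_singleton_connected G v
      · obtain ⟨T, hTC, hvT, hTcard, hTconn⟩ := ih hk1 (by omega)
        -- find u ∈ C \ T
        have hlt : T.card < C.card := by omega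
        obtain ⟨u, huC, huT⟩ : ∃ u ∈ C, u ∉ T := by
          by_contra h
          push_neg at h
          have := Finset.card_le_card h
          omega
        obtain ⟨p⟩ := hC.preconnected ⟨v, hv⟩ ⟨u, huC⟩
        obtain ⟨x, hxS, y, hyS, hadj⟩ :=
          exists_boundary _ p {z : (↑C : Set V) | ↑z ∈ T} (by simpa using hvT) (by simpa using huT)
        have hGadj : G.Adj ↑x ↑y := by simpa using hadj
        refine ⟨insert ↑y T, ?_, Finset.mem_insert_of_mem hvT, ?_, ?_⟩
        · exact Finset.insert_subset y.2 hTC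
        · rw [Finset.card_insert_of_notMem hyS, hTcard]
        · rw [Finset.coe_insert, Set.insert_eq]
          exact G.connected_induce_union (induce_singleton_connected G ↑y).preconnected hTconn.preconnected
            rfl hxS hGadj.symm


/-- `Ind_r(G) = st(v) ∪ ⋃_{S ∈ Supp_r(v,G)} st(S)`. -/
theorem indCompl_eq_star_union (G : SimpleGraph V) (r : ℕ) (hr : 1 ≤ r) (v : V) :
    IndCompl G r =
      starCl (IndCompl G r) {v} ∪ ⋃ S ∈ Supp G r v, starCl (IndCompl G r) S := by
  classical
  ext A
  simp only [Set.mem_union, Set.mem_iUnion, exists_prop, starCl, Set.mem_setOf_eq]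
  constructor
  · intro hA
    by_cases hstar : ({v} ∪ A) ∈ IndCompl G r
    · exact Or.inl ⟨hA, hstar⟩
    · right
      set A' : Finset V := {v} ∪ A with hA'def
      have hvA' : v ∈ A' := by simp [hA'def]
      have hvA's : v ∈ (↑A' : Set V) := by exact_mod_cast hvA'
      simp only [IndCompl, Set.mem_setOf_eq, IsRIndep, not_forall, not_le] at hstar
      obtain ⟨u, hu, hcard⟩ := hstar
      have hus : u ∈ (↑A' : Set V) := by exact_mod_cast hu
      -- v is reachable from u in G[A']
      have hreach : (G.induce (↑A' : Set V)).Reachable ⟨u, hu⟩ ⟨v, hvA's⟩ := by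
        by_contra hnr
        have huv : u ≠ v := by
          intro h; subst h; exact hnr (Reachable.refl _)
        have huA : u ∈ A := by
          rcases Finset.mem_union.mp hu with h | h
          · exact absurd (Finset.mem_singleton.mp h) huv
          · exact h
        have huAs : u ∈ (↑A : Set V) := by exact_mod_cast huA
        have hle := hA u huA
        have hsub : (↑A : Set V) ⊆ (↑A' : Set V) := by
          intro x hx
          simp only [hA'def, Finset.coe_union, Set.mem_union]
          exact Or.inr hx
        have himg : Subtype.val '' {w : (↑A' : Set V) |
              (G.induce (↑A' : Set V)).Reachable ⟨u, hu⟩ w} =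
            Subtype.val '' {w : (↑A : Set V) |
              (G.induce (↑A : Set V)).Reachable ⟨u, huA⟩ w} := by
          apply Set.Subset.antisymm
          · rintro w ⟨⟨w, hw⟩, hwre, rfl⟩
            obtain ⟨p⟩ := hwre
            have hsup : ∀ x ∈ p.support, ↑x ∈ (↑A : Set V) := by
              intro x hx
              have hxr : (G.induce (↑A' : Set V)).Reachable ⟨u, hu⟩ x :=
                ⟨p.takeUntil x hx⟩
              have hxv : (↑x : V) ≠ v := by
                intro h
                exact hnr (by rw [show (⟨v, hvA's⟩ : (↑A' : Set V)) = x from Subtype.ext h.symm]; exact hxr)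
              have hx2 : (↑x : V) ∈ A' := by exact_mod_cast x.2
              rcases Finset.mem_union.mp hx2 with h | h
              · exact absurd (Finset.mem_singleton.mp h) hxv
              · exact_mod_cast h
            have hwA : w ∈ (↑A : Set V) := hsup _ p.end_mem_support
            exact ⟨⟨w, hwA⟩, walk_transfer G p hsup huAs hwA, rfl⟩
          · rintro w ⟨⟨w, hw⟩, hwre, rfl⟩
            have := hwre.map (G.induceHomOfLE hsub).toHom
            exact ⟨⟨w, hsub hw⟩, this, rfl⟩
        have e1 := Set.ncard_image_of_injective {w : (↑A' : Set V) |
              (G.induce (↑A' : Set V)).Reachable ⟨u, hu⟩ w} Subtype.val_injective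
        have e2 := Set.ncard_image_of_injective {w : (↑A : Set V) |
              (G.induce (↑A : Set V)).Reachable ⟨u, huA⟩ w} Subtype.val_injective
        rw [himg, e2] at e1
        omega
      -- the reachable set of v coincides with that of u
      have hcardv : r < Set.ncard {w : (↑A' : Set V) |
          (G.induce (↑A' : Set V)).Reachable ⟨v, hvA's⟩ w} := by
        have hset : {w : (↑A' : Set V) | (G.induce (↑A' : Set V)).Reachable ⟨u, hu⟩ w} =
            {w : (↑A' : Set V) | (G.induce (↑A' : Set V)).Reachable ⟨v, hvA's⟩ w} :=
          Set.ext fun w => ⟨fun h => hreach.symm.trans h, fun h => hreach.trans h⟩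
        rw [← hset]
        exact hcard
      -- the component of v, as a finset
      set C : Finset V := A'.filter (fun w => ∃ hw : w ∈ (↑A' : Set V),
        (G.induce (↑A' : Set V)).Reachable ⟨v, hvA's⟩ ⟨w, hw⟩) with hCdef
      have hCcoe : Subtype.val '' {w : (↑A' : Set V) |
          (G.induce (↑A' : Set V)).Reachable ⟨v, hvA's⟩ w} = (↑C : Set V) := by
        ext w
        constructor
        · rintro ⟨⟨w, hw⟩, hwre, rfl⟩
          have : w ∈ C := Finset.mem_filter.mpr ⟨by exact_mod_cast hw, hw, hwre⟩
          exact_mod_cast this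
        · intro hw
          obtain ⟨hwA', hw', hre⟩ := Finset.mem_filter.mp (by exact_mod_cast hw : w ∈ C)
          exact ⟨⟨w, hw'⟩, hre, rfl⟩
      have hCcard : r + 1 ≤ C.card := by
        have e1 := Set.ncard_image_of_injective {w : (↑A' : Set V) |
            (G.induce (↑A' : Set V)).Reachable ⟨v, hvA's⟩ w} Subtype.val_injective
        rw [hCcoe, Set.ncard_coe_finset] at e1
        omega
      have hvC : v ∈ C := Finset.mem_filter.mpr ⟨hvA', hvA's, Reachable.refl _⟩
      have hCsub : C ⊆ A' := Finset.filter_subset _ _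
      have hCconn : (G.induce (↑C : Set V)).Connected := by
        rw [connected_iff_exists_forall_reachable]
        refine ⟨⟨v, by exact_mod_cast hvC⟩, ?_⟩
        rintro ⟨w, hw⟩
        obtain ⟨hwA', hw', hre⟩ := Finset.mem_filter.mp (by exact_mod_cast hw : w ∈ C)
        obtain ⟨p⟩ := hre
        have hsup : ∀ x ∈ p.support, ↑x ∈ (↑C : Set V) := by
          intro x hx
          have hxr : (G.induce (↑A' : Set V)).Reachable ⟨v, hvA's⟩ x :=
            ⟨p.takeUntil x hx⟩
          have : (↑x : V) ∈ C := Finset.mem_filter.mpr ⟨by exact_mod_cast x.2, x.2, hxr⟩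
          exact_mod_cast this
        exact walk_transfer G p hsup (by exact_mod_cast hvC) hw
      obtain ⟨T, hTC, hvT, hTcard, hTconn⟩ := grow G C v hvC hCconn (r + 1) (by omega) hCcard
      refine ⟨T.erase v, ⟨Finset.notMem_erase v T, ?_, ?_⟩, hA, ?_⟩
      · rw [Finset.card_erase_of_mem hvT, hTcard]; omega
      · have h1 : (insert v ↑(T.erase v) : Set V) = (↑T : Set V) := by
          rw [← Finset.coe_insert, Finset.insert_erase hvT]
        rw [h1]
        exact hTconn
      · have hSsub : T.erase v ⊆ A := by
          intro x hx
          have hxA' : x ∈ A' := hCsub (hTC (Finset.mem_of_mem_erase hx))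
          rcases Finset.mem_union.mp hxA' with h | h
          · exact absurd (Finset.mem_singleton.mp h) (Finset.ne_of_mem_erase hx)
          · exact h
        rw [Finset.union_eq_right.mpr hSsub]
        exact hA
  · rintro (⟨h, _⟩ | ⟨S, hS, h, _⟩) <;> exact h
end

section
/- If v is a simplicial vertex of a graph G (i.e., G[N(v)] is complete), then for every r-support S of v, the induced subgraph G[S] is connected and N(v) ⊆ N[S]. -/
open SimpleGraph Finset CategoryTheory AlgebraicTopology

variable {V : Type} [Fintype V] [DecidableEq V]

lemma walk_avoid {G : SimpleGraph V} {v : V}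
    (hv : ∀ a ∈ G.neighborSet v, ∀ b ∈ G.neighborSet v, a ≠ b → G.Adj a b)
    {S : Set V} (hvS : v ∉ S) :
    ∀ (n : ℕ) (a b : (insert v S : Set V)) (p : (G.induce (insert v S)).Walk a b),
      p.length ≤ n → ∀ (ha : a.val ∈ S) (hb : b.val ∈ S),
      (G.induce S).Reachable ⟨a.val, ha⟩ ⟨b.val, hb⟩ := by
  intro n
  induction n with
  | zero =>
    intro a b p hp ha hb
    cases p with
    | nil => exact Reachable.refl _
    | cons h q => simp at hp
  | succ n ih =>
    intro a b p hp ha hb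
    cases p with
    | nil => exact Reachable.refl _
    | @cons _ c _ h q =>
      by_cases hc : c.val = v
      · cases q with
        | nil =>
          exact absurd hb (by rw [← hc] at hvS; exact hvS)
        | @cons _ d _ h2 q2 =>
          have hadj1 : G.Adj a.val c.val := h
          have hadj2 : G.Adj c.val d.val := h2
          have hdv : d.val ≠ v := by
            intro hdv; rw [hc, hdv] at hadj2; exact G.irrefl hadj2
          have hd : d.val ∈ S := d.2.resolve_left hdv
          have hlen : q2.length ≤ n := by
            simp only [Walk.length_cons] at hp; omega
          have htail := ih d b q2 hlen hd hb
          by_cases had : a.val = d.val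
          · have : (⟨a.val, ha⟩ : S) = ⟨d.val, hd⟩ := Subtype.ext had
            rw [this]; exact htail
          · have haN : a.val ∈ G.neighborSet v := by
              rw [hc] at hadj1; exact (G.mem_neighborSet v a.val).2 hadj1.symm
            have hdN : d.val ∈ G.neighborSet v := by
              rw [hc] at hadj2; exact (G.mem_neighborSet v d.val).2 hadj2
            have : (G.induce S).Adj ⟨a.val, ha⟩ ⟨d.val, hd⟩ :=
              hv a.val haN d.val hdN had
            exact this.reachable.trans htail
      · have hcS : c.val ∈ S := c.2.resolve_left hc
        have hadj : (G.induce S).Adj ⟨a.val, ha⟩ ⟨c.val, hcS⟩ := h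
        have hlen : q.length ≤ n := by
          simp only [Walk.length_cons] at hp; omega
        exact hadj.reachable.trans (ih c b q hlen hcS hb)

/-- if `v` is simplicial then every `r`-support `S` of `v` induces a
connected subgraph and `N(v) ⊆ N[S]`. -/
theorem simplicial_vertex_support (G : SimpleGraph V) (r : ℕ) (hr : 1 ≤ r) (v : V)
    (hv : ∀ a ∈ G.neighborSet v, ∀ b ∈ G.neighborSet v, a ≠ b → G.Adj a b)
    (S : Finset V) (hS : S ∈ Supp G r v) :
    (G.induce (S : Set V)).Connected ∧ G.neighborSet v ⊆ closedNbhd G ↑S := by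
  obtain ⟨hvS, hcard, hconn⟩ := hS
  have hne : (S : Set V).Nonempty := by
    rw [Finset.coe_nonempty, ← Finset.card_pos, hcard]; omega
  have hvS' : v ∉ (S : Set V) := by simpa using hvS
  -- connectivity
  have hconn' : (G.induce (S : Set V)).Connected := by
    rw [SimpleGraph.connected_iff]
    constructor
    · intro x y
      have hreach := hconn.preconnected
        ⟨x.val, Set.mem_insert_of_mem _ x.2⟩ ⟨y.val, Set.mem_insert_of_mem _ y.2⟩
      obtain ⟨p⟩ := hreach
      have := walk_avoid hv hvS' p.length _ _ p le_rfl x.2 y.2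
      simpa using this
    · exact ⟨⟨hne.choose, hne.choose_spec⟩⟩
  refine ⟨hconn', ?_⟩
  -- v has a neighbor in S
  obtain ⟨s0, hs0⟩ := hne
  have hreach := hconn.preconnected
    ⟨v, Set.mem_insert _ _⟩ ⟨s0, Set.mem_insert_of_mem _ hs0⟩
  obtain ⟨p⟩ := hreach
  obtain ⟨c, hcS, hvc⟩ : ∃ c ∈ (S : Set V), G.Adj v c := by
    cases p with
    | nil => exact absurd hs0 (by simp at hvS'; simp_all)
    | @cons _ c _ h q =>
      have hadj : G.Adj v c.val := h
      have hcv : c.val ≠ v := fun hc => G.irrefl (hc ▸ hadj)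
      exact ⟨c.val, c.2.resolve_left hcv, hadj⟩
  intro w hw
  have hwN : G.Adj v w := hw
  by_cases hwS : w ∈ (S : Set V)
  · exact Or.inl hwS
  · right
    by_cases hwc : w = c
    · exact absurd (hwc ▸ hcS) hwS
    · exact ⟨c, hcS, hv w hwN c hvc hwc⟩
end

section
/- Let G be a connected graph, v ∈ V(G), and Supp_r(v,G) = {S_1,…,S_n}. If G[S_i] is connected and N(v) ⊆ N[S_i] for every i, then for all i ≠ j, st(S_i) ∩ st(S_j) ⊆ st(v) in Ind_r(G). -/
open SimpleGraph Finset CategoryTheory AlgebraicTopology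
set_option linter.unusedSectionVars false

variable {V : Type} [Fintype V] [DecidableEq V]

/-- Reachability within a vertex set `s`, via a walk in `G` all of whose support is in `s`. -/
def ReachIn (G : SimpleGraph V) (s : Set V) (x y : V) : Prop :=
  ∃ p : G.Walk x y, ∀ a ∈ p.support, a ∈ s

lemma reachIn_mono {G : SimpleGraph V} {s t : Set V} (hst : s ⊆ t) {x y : V}
    (h : ReachIn G s x y) : ReachIn G t x y := by
  obtain ⟨p, hp⟩ := h; exact ⟨p, fun a ha => hst (hp a ha)⟩

lemma reachIn_refl {G : SimpleGraph V} {s : Set V} {x : V} (hx : x ∈ s) : ReachIn G s x x :=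
  ⟨Walk.nil, by simp [hx]⟩

lemma reachIn_symm {G : SimpleGraph V} {s : Set V} {x y : V} (h : ReachIn G s x y) :
    ReachIn G s y x := by
  obtain ⟨p, hp⟩ := h; exact ⟨p.reverse, by simpa using hp⟩

lemma reachIn_trans {G : SimpleGraph V} {s : Set V} {x y z : V} (h : ReachIn G s x y)
    (h' : ReachIn G s y z) : ReachIn G s x z := by
  obtain ⟨p, hp⟩ := h; obtain ⟨q, hq⟩ := h'
  refine ⟨p.append q, fun a ha => ?_⟩
  rw [Walk.support_append, List.mem_append] at ha
  rcases ha with ha | ha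
  · exact hp a ha
  · exact hq a (List.mem_of_mem_tail ha)

lemma reachIn_mem_left {G : SimpleGraph V} {s : Set V} {x y : V} (h : ReachIn G s x y) : x ∈ s := by
  obtain ⟨p, hp⟩ := h; exact hp x p.start_mem_support

lemma reachIn_mem_right {G : SimpleGraph V} {s : Set V} {x y : V} (h : ReachIn G s x y) : y ∈ s := by
  obtain ⟨p, hp⟩ := h; exact hp y p.end_mem_support

/-- A hom from the induced subgraph back to `G`. -/
def induceToHom (G : SimpleGraph V) (s : Set V) : G.induce s →g G :=
  ⟨Subtype.val, fun h => h⟩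

lemma reachIn_of_induce_reachable {G : SimpleGraph V} {s : Set V} {x y : s}
    (h : (G.induce s).Reachable x y) : ReachIn G s x.1 y.1 := by
  obtain ⟨p⟩ := h
  refine ⟨p.map (induceToHom G s), fun a ha => ?_⟩
  replace ha : a ∈ (p.map (induceToHom G s)).support := ha
  rw [Walk.support_map, List.mem_map] at ha
  obtain ⟨b, -, rfl⟩ := ha
  exact b.2

lemma induce_reachable_of_reachIn' {G : SimpleGraph V} {s : Set V} {x y : V} (p : G.Walk x y) :
    ∀ (_ : ∀ a ∈ p.support, a ∈ s) (hx : x ∈ s) (hy : y ∈ s),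
      (G.induce s).Reachable ⟨x, hx⟩ ⟨y, hy⟩ := by
  induction p with
  | nil => intro _ hx hy; rfl
  | @cons a b c h q ih =>
    intro hp hx hy
    have hb : b ∈ s := hp b (by simp)
    have hadj : (G.induce s).Adj ⟨a, hx⟩ ⟨b, hb⟩ := h
    exact hadj.reachable.trans (ih (fun u hu => hp u (by simp [hu])) hb hy)

lemma induce_reachable_of_reachIn {G : SimpleGraph V} {s : Set V} {x y : V} (p : G.Walk x y)
    (hp : ∀ a ∈ p.support, a ∈ s) :
    (G.induce s).Reachable ⟨x, hp x p.start_mem_support⟩ ⟨y, hp y p.end_mem_support⟩ :=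
  induce_reachable_of_reachIn' p hp _ _

lemma val_image_reachable {G : SimpleGraph V} {s : Set V} (x : s) :
    Subtype.val '' {w : s | (G.induce s).Reachable x w} = {y | ReachIn G s x.1 y} := by
  ext y
  constructor
  · rintro ⟨w, hw, rfl⟩
    exact reachIn_of_induce_reachable hw
  · rintro ⟨p, hp⟩
    exact ⟨⟨y, hp y p.end_mem_support⟩, by
      simpa [Subtype.ext_iff] using induce_reachable_of_reachIn p hp, rfl⟩

lemma isRIndep_iff {G : SimpleGraph V} {r : ℕ} {A : Finset V} :
    IsRIndep G r A ↔ ∀ x ∈ A, {y | ReachIn G (↑A) x y}.ncard ≤ r := by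
  constructor
  · intro h x hx
    rw [← val_image_reachable (⟨x, hx⟩ : (↑A : Set V)),
      Set.ncard_image_of_injective _ Subtype.val_injective]
    exact h x hx
  · intro h x hx
    have := h x hx
    rw [← val_image_reachable (⟨x, hx⟩ : (↑A : Set V)),
      Set.ncard_image_of_injective _ Subtype.val_injective] at this
    exact this

lemma support_component {G : SimpleGraph V} {r : ℕ} {T τ : Finset V}
    (hc : (G.induce (T : Set V)).Connected) (hcard : T.card = r)
    (hind : IsRIndep G r (T ∪ τ)) {s y : V} (hs : s ∈ T)
    (h : ReachIn G ↑(T ∪ τ) s y) : y ∈ T := by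
  have hTsub : (↑T : Set V) ⊆ ↑(T ∪ τ) :=
    Finset.coe_subset.mpr Finset.subset_union_left
  have hsub : (↑T : Set V) ⊆ {z | ReachIn G ↑(T ∪ τ) s z} := by
    intro t ht
    exact reachIn_mono hTsub
      (reachIn_of_induce_reachable (hc.preconnected ⟨s, hs⟩ ⟨t, ht⟩))
  have hle : {z | ReachIn G ↑(T ∪ τ) s z}.ncard ≤ r :=
    isRIndep_iff.mp hind s (Finset.mem_union_left _ hs)
  have heq : (↑T : Set V) = {z | ReachIn G ↑(T ∪ τ) s z} := by
    apply Set.eq_of_subset_of_ncard_le hsub _ (Set.toFinite _)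
    rwa [Set.ncard_coe_finset, hcard]
  have hy : y ∈ (↑T : Set V) := by rw [heq]; exact h
  exact Finset.mem_coe.mp hy

/-- under the support hypotheses, `st(S_i) ∩ st(S_j) ⊆ st(v)`. -/
theorem star_inter_star_subset (G : SimpleGraph V) (hG : G.Connected) (r : ℕ)
    (hr : 1 ≤ r) (v : V) (n : ℕ) (S : Fin n → Finset V)
    (hinj : Function.Injective S) (hrange : Supp G r v = Set.range S)
    (hconn : ∀ i, (G.induce (S i : Set V)).Connected)
    (hN : ∀ i, G.neighborSet v ⊆ closedNbhd G ↑(S i)) :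
    ∀ i j : Fin n, i ≠ j →
      starCl (IndCompl G r) (S i) ∩ starCl (IndCompl G r) (S j) ⊆
        starCl (IndCompl G r) {v} := by
  intro i j hij τ hτ
  obtain ⟨⟨hτK, hiτ⟩, ⟨-, hjτ⟩⟩ := hτ
  -- facts about the supports
  have hSupp : ∀ k : Fin n, S k ∈ Supp G r v := by
    intro k; rw [hrange]; exact ⟨k, rfl⟩
  have hvS : ∀ k : Fin n, v ∉ S k := fun k => (hSupp k).1
  have hcard : ∀ k : Fin n, (S k).card = r := fun k => (hSupp k).2.1
  -- key: anything reachable in S k ∪ τ from a vertex of S k lies in S k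
  have key : ∀ k : Fin n, IsRIndep G r (S k ∪ τ) →
      ∀ {s y : V}, s ∈ S k → ReachIn G ↑(S k ∪ τ) s y → y ∈ S k := by
    intro k hk s y hs h
    exact support_component (hconn k) (hcard k) hk hs h
  refine ⟨hτK, ?_⟩
  -- show {v} ∪ τ is r-independent
  show IsRIndep G r ({v} ∪ τ)
  set A : Finset V := {v} ∪ τ with hA
  have hvA : v ∈ A := Finset.mem_union_left _ (Finset.mem_singleton_self v)
  have hmemA : ∀ {a : V}, a ∈ A → a = v ∨ a ∈ τ := by
    intro a ha
    rcases Finset.mem_union.mp ha with h | h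
    · exact Or.inl (Finset.mem_singleton.mp h)
    · exact Or.inr h
  rw [isRIndep_iff]
  intro x hx
  by_cases hreach : ReachIn G (↑A) x v
  · -- the component of x contains v; show it is inside {v} ∪ (S i ∩ S j)
    have hRsub : {y | ReachIn G (↑A) x y} ⊆ insert v (↑(S i ∩ S j) : Set V) := by
      intro y hy
      have hvy : ReachIn G (↑A) v y := reachIn_trans (reachIn_symm hreach) hy
      by_cases hyv : y = v
      · exact Or.inl hyv
      · obtain ⟨p, hp⟩ := hvy
        have hqpath : p.bypass.IsPath := p.bypass_isPath
        have hqs : ∀ a ∈ p.bypass.support, a ∈ (↑A : Set V) :=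
          fun a ha => hp a (p.support_bypass_subset ha)
        right
        rw [Finset.coe_inter]
        cases hb : p.bypass with
        | nil => exact absurd rfl (Ne.symm hyv)
        | @cons _ b _ hadj q' =>
          rw [hb] at hqpath hqs
          have hq'path : q'.IsPath ∧ v ∉ q'.support :=
            (SimpleGraph.Walk.cons_isPath_iff _ _).mp hqpath
          have hbv : b ≠ v := (G.ne_of_adj hadj).symm
          have hbA : b ∈ A := hqs b (by simp)
          have hbτ : b ∈ τ := (hmemA hbA).resolve_left hbv
          have hq'τ : ∀ a ∈ q'.support, a ∈ (↑τ : Set V) := by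
            intro a ha
            have haA : a ∈ A := hqs a (by simp [ha])
            rcases hmemA haA with rfl | h
            · exact absurd ha hq'path.2
            · exact h
          -- b ∈ S k for k = i, j, then y ∈ S k
          have hyk : ∀ k : Fin n, IsRIndep G r (S k ∪ τ) → y ∈ S k := by
            intro k hk
            have hbN : b ∈ G.neighborSet v := hadj
            have hbSk : b ∈ S k := by
              rcases hN k hbN with h | ⟨s, hs, hadj'⟩
              · exact Finset.mem_coe.mp h
              · refine key k hk hs ⟨SimpleGraph.Walk.cons hadj'.symm SimpleGraph.Walk.nil, ?_⟩
                intro a ha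
                simp only [SimpleGraph.Walk.support_cons, SimpleGraph.Walk.support_nil,
                  List.mem_cons, List.mem_singleton] at ha
                rcases ha with rfl | rfl | h
                · exact Finset.mem_coe.mpr (Finset.mem_union_left _ hs)
                · exact Finset.mem_coe.mpr (Finset.mem_union_right _ hbτ)
                · simp at h
            refine key k hk hbSk ⟨q', ?_⟩
            intro a ha
            exact Finset.mem_coe.mpr
              (Finset.mem_union_right _ (Finset.mem_coe.mp (hq'τ a ha)))
          exact ⟨hyk i hiτ, hyk j hjτ⟩
    have hcardlt : (S i ∩ S j).card < r := by
      have hss : S i ∩ S j ⊂ S i := by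
        refine Finset.ssubset_iff_subset_ne.mpr ⟨Finset.inter_subset_left, ?_⟩
        intro hEq
        have : S i ⊆ S j := by
          intro a ha
          have : a ∈ S i ∩ S j := by rw [hEq]; exact ha
          exact (Finset.mem_inter.mp this).2
        have : S i = S j :=
          Finset.eq_of_subset_of_card_le this (le_of_eq ((hcard j).trans (hcard i).symm))
        exact hij (hinj this)
      calc (S i ∩ S j).card < (S i).card := Finset.card_lt_card hss
        _ = r := hcard i
    calc {y | ReachIn G (↑A) x y}.ncard
        ≤ (insert v (↑(S i ∩ S j) : Set V)).ncard :=
          Set.ncard_le_ncard hRsub (Set.toFinite _)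
      _ ≤ (↑(S i ∩ S j) : Set V).ncard + 1 := Set.ncard_insert_le _ _
      _ = (S i ∩ S j).card + 1 := by rw [Set.ncard_coe_finset]
      _ ≤ r := by omega
  · -- v is not in the component of x: the component lies in τ
    have hxv : x ≠ v := by
      rintro rfl
      exact hreach (reachIn_refl (Finset.mem_coe.mpr hvA))
    have hxτ : x ∈ τ := (hmemA hx).resolve_left hxv
    have hsub : {y | ReachIn G (↑A) x y} ⊆ {y | ReachIn G (↑τ) x y} := by
      intro y hy
      obtain ⟨p, hp⟩ := hy
      have hvsup : v ∉ p.support := by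
        intro hv
        exact hreach ⟨p.takeUntil v hv, fun a ha => hp a (p.support_takeUntil_subset hv ha)⟩
      refine ⟨p, fun a ha => ?_⟩
      have haA : a ∈ A := hp a ha
      rcases hmemA haA with rfl | h
      · exact absurd ha hvsup
      · exact h
    calc {y | ReachIn G (↑A) x y}.ncard
        ≤ {y | ReachIn G (↑τ) x y}.ncard := Set.ncard_le_ncard hsub (Set.toFinite _)
      _ ≤ r := isRIndep_iff.mp hτK x hxτ
end

section
/- Let G be a connected graph, v ∈ V(G), and let S be an r-support of v such that G[T] is connected for every r-support T of v and N(v) ⊆ N[S]. Then st(S) ∩ st(v) = Ind_r(G − N[S]) * Bd(Δ^S), the join of the r-independence complex of G − N[S] with the boundary of the simplex on S. -/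
open SimpleGraph Finset CategoryTheory AlgebraicTopology

variable {V : Type} [Fintype V] [DecidableEq V]

section AuxSSIS
variable (G : SimpleGraph V)

lemma reach_mono' {s t : Set V} (h : s ⊆ t) {a b : ↥s}
    (hr : (G.induce s).Reachable a b) :
    (G.induce t).Reachable ⟨a.1, h a.2⟩ ⟨b.1, h b.2⟩ :=
  by
  let f : G.induce s →g G.induce t := ⟨Set.inclusion h, fun hadj => hadj⟩
  exact hr.map f

lemma closed_reach' {C A : Set V} (hCA : C ⊆ A)
    (hcl : ∀ a ∈ C, ∀ b ∈ A, G.Adj a b → b ∈ C) :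
    ∀ {a b : ↥A}, (G.induce A).Walk a b → ∀ (ha : a.1 ∈ C),
      ∃ hb : b.1 ∈ C, (G.induce C).Reachable ⟨a.1, ha⟩ ⟨b.1, hb⟩ := by
  intro a b p
  induction p with
  | nil => intro ha; exact ⟨ha, Reachable.refl _⟩
  | @cons u c w h q ih =>
      intro ha
      have hc : c.1 ∈ C := hcl _ ha _ c.2 h
      obtain ⟨hb, hr⟩ := ih hc
      have hadj : (G.induce C).Adj ⟨u.1, ha⟩ ⟨c.1, hc⟩ := h
      exact ⟨hb, hadj.reachable.trans hr⟩

def compV' (s : Set V) (v : V) (hv : v ∈ s) : Set V :=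
  Subtype.val '' {w : ↥s | (G.induce s).Reachable ⟨v, hv⟩ w}

lemma compV'_subset {s : Set V} {v : V} {hv : v ∈ s} : compV' G s v hv ⊆ s := by
  rintro x ⟨w, _, rfl⟩; exact w.2

lemma compV'_mono {s t : Set V} (h : s ⊆ t) {v : V} (hv : v ∈ s) :
    compV' G s v hv ⊆ compV' G t v (h hv) := by
  rintro x ⟨w, hw, rfl⟩
  exact ⟨⟨w.1, h w.2⟩, reach_mono' G h hw, rfl⟩

lemma compV'_closed {C A : Set V} (hCA : C ⊆ A)
    (hcl : ∀ a ∈ C, ∀ b ∈ A, G.Adj a b → b ∈ C) {v : V} (hv : v ∈ C) :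
    compV' G A v (hCA hv) ⊆ compV' G C v hv := by
  rintro x ⟨w, hw, rfl⟩
  obtain ⟨p⟩ := hw
  obtain ⟨hb, hr⟩ := closed_reach' G hCA hcl p hv
  exact ⟨⟨w.1, hb⟩, hr, rfl⟩

lemma subset_compV'_of_connected {s A : Set V} (hsA : s ⊆ A)
    (hconn : (G.induce s).Connected) {v : V} (hv : v ∈ s) :
    s ⊆ compV' G A v (hsA hv) := by
  intro x hx
  exact ⟨⟨x, hsA hx⟩, reach_mono' G hsA (hconn.preconnected ⟨v, hv⟩ ⟨x, hx⟩), rfl⟩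

lemma connected_insert' {s : Set V} (hconn : (G.induce s).Connected) {a b : V}
    (ha : a ∈ s) (hadj : G.Adj b a) : (G.induce (insert b s)).Connected := by
  rw [connected_iff]
  have hsub : s ⊆ insert b s := Set.subset_insert _ _
  have key : ∀ x : ↥(insert b s), (G.induce (insert b s)).Reachable ⟨b, Set.mem_insert _ _⟩ x := by
    rintro ⟨x, hx⟩
    rcases hx with rfl | hx
    · exact Reachable.refl _
    · have h1 : (G.induce (insert b s)).Adj ⟨b, Set.mem_insert _ _⟩ ⟨a, hsub ha⟩ := hadj
      exact h1.reachable.trans (reach_mono' G hsub (hconn.preconnected ⟨a, ha⟩ ⟨x, hx⟩))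
  exact ⟨fun x y => (key x).symm.trans (key y), ⟨⟨b, Set.mem_insert _ _⟩⟩⟩
end AuxSSIS

section Aux2
variable (G : SimpleGraph V)

lemma ncard_compV'_le_card (s : Finset V) {v : V} {hv : v ∈ (s : Set V)} :
    (compV' G ↑s v hv).ncard ≤ s.card := by
  calc (compV' G ↑s v hv).ncard ≤ (↑s : Set V).ncard :=
        Set.ncard_le_ncard (compV'_subset G) (Set.toFinite _)
    _ = s.card := Set.ncard_coe_finset s

lemma isRIndep_ncard (r : ℕ) {A : Finset V} (h : IsRIndep G r A) {v : V} (hv : v ∈ (A : Set V)) :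
    (compV' G ↑A v hv).ncard ≤ r := by
  rw [compV', Set.ncard_image_of_injective _ Subtype.val_injective]
  exact h v (Finset.mem_coe.mp hv)

lemma isRIndep_of_ncard (r : ℕ) {A : Finset V}
    (h : ∀ (v : V) (hv : v ∈ (A : Set V)), (compV' G ↑A v hv).ncard ≤ r) : IsRIndep G r A := by
  intro v hv
  have h2 := h v hv
  rwa [compV', Set.ncard_image_of_injective _ Subtype.val_injective] at h2

lemma isRIndep_mono {r : ℕ} {A B : Finset V} (hBA : B ⊆ A) (h : IsRIndep G r A) :
    IsRIndep G r B := by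
  apply isRIndep_of_ncard
  intro v hv
  have hsub : (↑B : Set V) ⊆ (↑A : Set V) := Finset.coe_subset.mpr hBA
  calc (compV' G ↑B v hv).ncard ≤ (compV' G ↑A v (hsub hv)).ncard :=
        Set.ncard_le_ncard (compV'_mono G hsub hv) (Set.toFinite _)
    _ ≤ r := isRIndep_ncard G r h _

lemma indep_of_parts {r : ℕ} (A : Finset V)
    (hpart : ∀ u ∈ A, ∃ C : Finset V, u ∈ C ∧ C ⊆ A ∧
      (∀ a ∈ C, ∀ b ∈ A, G.Adj a b → b ∈ C) ∧
      (∀ (hu : u ∈ (↑C : Set V)), (compV' G ↑C u hu).ncard ≤ r)) :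
    IsRIndep G r A := by
  apply isRIndep_of_ncard
  intro u hu
  obtain ⟨C, huC, hCA, hcl, hbound⟩ := hpart u (Finset.mem_coe.mp hu)
  have hCA' : (↑C : Set V) ⊆ ↑A := Finset.coe_subset.mpr hCA
  have hcl' : ∀ a ∈ (↑C : Set V), ∀ b ∈ (↑A : Set V), G.Adj a b → b ∈ (↑C : Set V) := by
    intro a ha b hb hab; exact hcl a ha b hb hab
  have huC' : u ∈ (↑C : Set V) := huC
  exact le_trans (Set.ncard_le_ncard (compV'_closed G hCA' hcl' huC') (Set.toFinite _))
    (hbound huC')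

end Aux2

/-- `st(S) ∩ st(v) = Ind_r(G − N[S]) * Bd(Δ^S)`. -/
theorem star_inter_star_vertex (G : SimpleGraph V) (hG : G.Connected) (r : ℕ)
    (hr : 1 ≤ r) (v : V) (S : Finset V) (hS : S ∈ Supp G r v)
    (hconn : ∀ T ∈ Supp G r v, (G.induce (T : Set V)).Connected)
    (hN : G.neighborSet v ⊆ closedNbhd G ↑S) :
    starCl (IndCompl G r) S ∩ starCl (IndCompl G r) {v} =
      joinCl (IndComplOn G r ((closedNbhd G ↑S)ᶜ)) {B | B ⊆ S ∧ B ≠ S} := by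
  obtain ⟨hvS, hScard, hSvconn⟩ := hS
  have hSconn : (G.induce (S : Set V)).Connected := hconn S ⟨hvS, hScard, hSvconn⟩
  ext A
  simp only [Set.mem_inter_iff, starCl, IndCompl, joinCl, IndComplOn, Set.mem_setOf_eq,
    Set.sep_setOf, Set.mem_compl_iff]
  constructor
  · rintro ⟨⟨hA, hSA⟩, -, hvA⟩
    have claim1 : ¬ S ⊆ A := by
      intro hSsubA
      have hsub : (insert v ↑S : Set V) ⊆ (↑({v} ∪ A) : Set V) := by
        intro x hx
        rcases hx with rfl | hx
        · simp
        · simp [hSsubA (Finset.mem_coe.mp hx)]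
      have hv1 : v ∈ (insert v ↑S : Set V) := Set.mem_insert _ _
      have hle : (insert v (↑S : Set V)).ncard ≤ (compV' G ↑({v} ∪ A) v (hsub hv1)).ncard :=
        Set.ncard_le_ncard (subset_compV'_of_connected G hsub hSvconn hv1) (Set.toFinite _)
      have hcomp := isRIndep_ncard G r hvA (hsub hv1)
      have hcard : (insert v (↑S : Set V)).ncard = r + 1 := by
        rw [Set.ncard_insert_of_notMem (by simpa using hvS) (Set.toFinite _),
          Set.ncard_coe_finset, hScard]
      omega
    have claim2 : ∀ w ∈ A, w ∉ S → w ∉ closedNbhd G ↑S := by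
      intro w hwA hwS hwN
      rcases hwN with hw | ⟨s, hsS, hadj⟩
      · exact hwS (by simpa using hw)
      · have hconn' : (G.induce (insert w (↑S : Set V))).Connected :=
          connected_insert' G hSconn hsS hadj
        have hsub : (insert w (↑S : Set V)) ⊆ (↑(S ∪ A) : Set V) := by
          intro x hx
          rcases hx with rfl | hx
          · simp [hwA]
          · simp [Finset.mem_coe.mp hx]
        have hw1 : w ∈ insert w (↑S : Set V) := Set.mem_insert _ _
        have hle : (insert w (↑S : Set V)).ncard ≤ (compV' G ↑(S ∪ A) w (hsub hw1)).ncard :=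
          Set.ncard_le_ncard (subset_compV'_of_connected G hsub hconn' hw1) (Set.toFinite _)
        have hcomp := isRIndep_ncard G r hSA (hsub hw1)
        have hcard : (insert w (↑S : Set V)).ncard = r + 1 := by
          rw [Set.ncard_insert_of_notMem (by simpa using hwS) (Set.toFinite _),
            Set.ncard_coe_finset, hScard]
        omega
    refine ⟨A \ S, ⟨?_, isRIndep_mono G (Finset.sdiff_subset) hA⟩,
      A ∩ S, ⟨Finset.inter_subset_right, ?_⟩, (Finset.sdiff_union_inter A S).symm⟩
    · intro x hx
      have hx' : x ∈ A \ S := hx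
      rw [Finset.mem_sdiff] at hx'
      exact claim2 x hx'.1 hx'.2
    · intro heq
      exact claim1 (by rw [← heq]; exact Finset.inter_subset_left)
  · rintro ⟨σ, ⟨hσsub, hσind⟩, B, ⟨hBS, hBne⟩, rfl⟩
    have hσN : ∀ x ∈ σ, x ∉ closedNbhd G ↑S := fun x hx => hσsub hx
    have hBcard : B.card < r := by
      have h1 := Finset.card_lt_card (Finset.ssubset_iff_subset_ne.mpr ⟨hBS, hBne⟩)
      omega
    have hadjσS : ∀ a ∈ σ, ∀ b ∈ S, ¬ G.Adj a b := fun a ha b hb hab =>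
      hσN a ha (Or.inr ⟨b, hb, hab⟩)
    have hadjσv : ∀ a ∈ σ, ¬ G.Adj a v := fun a ha hab =>
      hσN a ha (hN hab.symm)
    have hA : IsRIndep G r (σ ∪ B) := by
      apply indep_of_parts
      intro u hu
      rcases Finset.mem_union.mp hu with huσ | huB
      · refine ⟨σ, huσ, Finset.subset_union_left, ?_,
          fun hu' => isRIndep_ncard G r hσind hu'⟩
        intro a ha b hb hab
        rcases Finset.mem_union.mp hb with h | h
        · exact h
        · exact absurd hab (hadjσS a ha b (hBS h))
      · refine ⟨B, huB, Finset.subset_union_right, ?_,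
          fun hu' => le_trans (ncard_compV'_le_card G B) (le_of_lt hBcard)⟩
        intro a ha b hb hab
        rcases Finset.mem_union.mp hb with h | h
        · exact absurd hab.symm (hadjσS b h a (hBS ha))
        · exact h
    have hSA : IsRIndep G r (S ∪ (σ ∪ B)) := by
      apply indep_of_parts
      intro u hu
      by_cases huσ : u ∈ σ
      · refine ⟨σ, huσ, Finset.subset_union_left.trans Finset.subset_union_right, ?_,
          fun hu' => isRIndep_ncard G r hσind hu'⟩
        intro a ha b hb hab
        rcases Finset.mem_union.mp hb with h | h
        · exact absurd hab (hadjσS a ha b h)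
        rcases Finset.mem_union.mp h with h2 | h2
        · exact h2
        · exact absurd hab (hadjσS a ha b (hBS h2))
      · have huS : u ∈ S := by
          rcases Finset.mem_union.mp hu with h | h
          · exact h
          rcases Finset.mem_union.mp h with h2 | h2
          · exact absurd h2 huσ
          · exact hBS h2
        refine ⟨S, huS, Finset.subset_union_left, ?_,
          fun hu' => le_trans (ncard_compV'_le_card G S) (le_of_eq hScard)⟩
        intro a ha b hb hab
        rcases Finset.mem_union.mp hb with h | h
        · exact h
        rcases Finset.mem_union.mp h with h2 | h2
        · exact absurd hab.symm (hadjσS b h2 a ha)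
        · exact hBS h2
    have hvA : IsRIndep G r ({v} ∪ (σ ∪ B)) := by
      apply indep_of_parts
      intro u hu
      by_cases huσ : u ∈ σ
      · refine ⟨σ, huσ, Finset.subset_union_left.trans Finset.subset_union_right, ?_,
          fun hu' => isRIndep_ncard G r hσind hu'⟩
        intro a ha b hb hab
        rcases Finset.mem_union.mp hb with h | h
        · rw [Finset.mem_singleton] at h
          subst h
          exact absurd hab (hadjσv a ha)
        rcases Finset.mem_union.mp h with h2 | h2
        · exact h2
        · exact absurd hab (hadjσS a ha b (hBS h2))
      · have huvB : u ∈ insert v B := by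
          rcases Finset.mem_union.mp hu with h | h
          · rw [Finset.mem_singleton] at h
            exact h ▸ Finset.mem_insert_self v B
          rcases Finset.mem_union.mp h with h2 | h2
          · exact absurd h2 huσ
          · exact Finset.mem_insert_of_mem h2
        refine ⟨insert v B, huvB, ?_, ?_, ?_⟩
        · intro x hx
          rcases Finset.mem_insert.mp hx with rfl | hx2
          · exact Finset.mem_union_left _ (Finset.mem_singleton_self x)
          · exact Finset.mem_union_right _ (Finset.mem_union_right _ hx2)
        · intro a ha b hb hab
          rcases Finset.mem_union.mp hb with h | h
          · rw [Finset.mem_singleton] at h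
            exact h ▸ Finset.mem_insert_self v B
          rcases Finset.mem_union.mp h with h2 | h2
          · exfalso
            rcases Finset.mem_insert.mp ha with rfl | ha2
            · exact hadjσv b h2 hab.symm
            · exact hadjσS b h2 a (hBS ha2) hab.symm
          · exact Finset.mem_insert_of_mem h2
        · intro hu'
          refine le_trans (ncard_compV'_le_card G (insert v B)) ?_
          have := Finset.card_insert_le v B
          omega
    exact ⟨⟨hA, hSA⟩, hA, hvA⟩
end
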